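/- Let S be the numerical semigroup generated by positive integers n_1,...,n_k with gcd(n_1,...,n_k)=1, let T(S)={g_1,...,g_t} be its set of pseudo-Frobenius numbers, and let f be an odd integer with f ≥ 3g(S)+1. Then the additive submonoid T of ℕ generated by 2n_1,...,2n_k, f−2g_1,...,f−2g_t is a numerical semigroup, i.e., its complement ℕ \ T is finite. -/

import Mathlib

/-- Membership of an integer in an additive submonoid of `ℕ`, viewed inside `ℤ`
via the inclusion `ℕ ⊆ ℤ`. -/
def AddSubmonoid.zmem (S : AddSubmonoid ℕ) (x : ℤ) : Prop :=
  ∃ n : ℕ, n ∈ S ∧ (n : ℤ) = x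

/-- The Frobenius number `g(S) = max {x ∈ ℤ : x ∉ S}` of a numerical semigroup. -/
noncomputable def frobeniusNumber (S : AddSubmonoid ℕ) : ℤ :=
  sSup {x : ℤ | ¬ S.zmem x}

/-- The set of pseudo-Frobenius numbers
`T(S) = {x ∈ ℤ \ S : x + s ∈ S for all s ∈ S, s ≠ 0}`. -/
def pseudoFrobeniusSet (S : AddSubmonoid ℕ) : Set ℤ :=
  {x : ℤ | ¬ S.zmem x ∧ ∀ s ∈ S, s ≠ 0 → S.zmem (x + s)}

/-- If a submonoid of `ℕ` contains two coprime elements `a`, `b` with `b > 0`,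
it contains every natural number `≥ a * b`. -/
lemma lemA (M : AddSubmonoid ℕ) (a b : ℕ) (ha : a ∈ M) (hb : b ∈ M)
    (hab : Nat.Coprime a b) (hb0 : 0 < b) : ∀ x, a * b ≤ x → x ∈ M := by
  intro x hx
  rcases Nat.eq_zero_or_pos a with ha0 | ha0
  · subst ha0
    have hb1 : b = 1 := by simpa [Nat.Coprime] using hab.symm
    subst hb1
    simpa using M.nsmul_mem hb x
  · haveI : NeZero b := ⟨hb0.ne'⟩
    set u : (ZMod b)ˣ := ZMod.unitOfCoprime a hab with hu
    set c : ℕ := ((x : ZMod b) * (↑u⁻¹ : ZMod b)).val with hcdef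
    have hclt : c < b := ZMod.val_lt _
    have hacx : a * c ≤ x := le_of_lt (lt_of_lt_of_le
      (mul_lt_mul_of_pos_left hclt ha0) hx)
    have hcast : ((c : ZMod b)) = (x : ZMod b) * (↑u⁻¹ : ZMod b) := by
      rw [hcdef]; exact ZMod.natCast_zmod_val _
    have hux : ((a : ZMod b)) = (u : ZMod b) := (ZMod.coe_unitOfCoprime a hab).symm
    have hmod : ((x - a * c : ℕ) : ZMod b) = 0 := by
      push_cast [Nat.cast_sub hacx]
      rw [hcast, hux]
      calc (x : ZMod b) - (u : ZMod b) * ((x : ZMod b) * (↑u⁻¹ : ZMod b))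
          = (x : ZMod b) - ((u : ZMod b) * (↑u⁻¹ : ZMod b)) * (x : ZMod b) := by ring
        _ = 0 := by rw [u.mul_inv]; ring
    have hdvd : b ∣ x - a * c := (ZMod.natCast_eq_zero_iff _ _).mp hmod
    obtain ⟨q, hq⟩ := hdvd
    have hxeq : x = a * c + b * q := by omega
    rw [hxeq, Nat.mul_comm a c, Nat.mul_comm b q]
    exact M.add_mem (by simpa [smul_eq_mul] using M.nsmul_mem ha c)
      (by simpa [smul_eq_mul] using M.nsmul_mem hb q)

/-- If a submonoid of `ℕ` contains consecutive elements `v`, `v+1`,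
then it contains all sufficiently large naturals. -/
lemma lemB (M : AddSubmonoid ℕ) (v : ℕ) (hv : v ∈ M) (hv1 : v + 1 ∈ M) :
    ∃ c : ℕ, ∀ x, c ≤ x → x ∈ M := by
  rcases Nat.eq_zero_or_pos v with h0 | h0
  · subst h0
    exact ⟨1 * 1, lemA M 1 1 hv1 hv1 (Nat.coprime_one_left 1) one_pos⟩
  · refine ⟨(v + 1) * v, lemA M (v + 1) v hv1 hv ?_ h0⟩
    have : Nat.Coprime (1 + v) v := Nat.coprime_add_self_left.mpr (Nat.coprime_one_left v)
    simpa [Nat.add_comm] using this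

lemma lemC (M : AddSubmonoid ℕ) (a b : ℕ) (ha : a ∈ M) (hb : b ∈ M)
    (hab : Nat.Coprime a b) (hb0 : 0 < b) : ((M : Set ℕ)ᶜ).Finite := by
  refine (Set.finite_Iio (a * b)).subset ?_
  intro x hx
  by_contra h
  exact hx (lemA M a b ha hb hab hb0 x (le_of_not_gt h))

/-- if `S = ⟨n₁,…,n_k⟩` with `gcd(n₁,…,n_k) = 1`,
`T(S) = {g₁,…,g_t}` and `f` is odd with `f ≥ 3 g(S) + 1`, then the additive
submonoid of `ℕ` generated by `2n₁,…,2n_k, f − 2g₁,…,f − 2g_t` has finite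
complement in `ℕ`, i.e. it is a numerical semigroup. -/
theorem stmt0 (k : ℕ) (hk : 0 < k) (n : Fin k → ℕ) (hn : ∀ i, 0 < n i)
    (hgcd : Finset.univ.gcd n = 1)
    (S : AddSubmonoid ℕ) (hS : S = AddSubmonoid.closure (Set.range n))
    (t : ℕ) (g : Fin t → ℤ) (hg : pseudoFrobeniusSet S = Set.range g)
    (f : ℤ) (hodd : Odd f) (hf : 3 * frobeniusNumber S + 1 ≤ f)
    (T : AddSubmonoid ℕ)
    (hT : T = AddSubmonoid.closure
      (Set.range (fun i => 2 * n i) ∪ Set.range (fun j => (f - 2 * g j).toNat))) :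
    ((T : Set ℕ)ᶜ).Finite := by
  classical
  -- The subgroup of differences of elements of `S`
  let D : AddSubgroup ℤ :=
    { carrier := {x | ∃ u ∈ S, ∃ v ∈ S, (u : ℤ) - v = x}
      zero_mem' := ⟨0, S.zero_mem, 0, S.zero_mem, by simp⟩
      add_mem' := by
        rintro x y ⟨u1, hu1, v1, hv1, rfl⟩ ⟨u2, hu2, v2, hv2, rfl⟩
        exact ⟨u1 + u2, S.add_mem hu1 hu2, v1 + v2, S.add_mem hv1 hv2, by push_cast; ring⟩
      neg_mem' := by
        rintro x ⟨u, hu, v, hv, rfl⟩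
        exact ⟨v, hv, u, hu, by push_cast; ring⟩ }
  have hnD : ∀ i, ((n i : ℤ)) ∈ D := fun i =>
    ⟨n i, by rw [hS]; exact AddSubmonoid.subset_closure ⟨i, rfl⟩, 0, S.zero_mem, by simp⟩
  obtain ⟨d, hd⟩ := Int.subgroup_cyclic D
  have hdvd : ∀ i, d.natAbs ∣ n i := by
    intro i
    have hmem := hnD i
    rw [hd, AddSubgroup.mem_closure_singleton] at hmem
    obtain ⟨mz, hmz⟩ := hmem
    have hzd : d ∣ (n i : ℤ) := ⟨mz, by rw [← hmz]; simp [zsmul_eq_mul, Int.cast_id]; ring⟩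
    have := Int.natAbs_dvd_natAbs.mpr hzd
    simpa using this
  have hd1 : d.natAbs = 1 :=
    Nat.dvd_one.mp (hgcd ▸ Finset.dvd_gcd (fun i _ => hdvd i))
  have h1D : (1 : ℤ) ∈ D := by
    rw [hd, AddSubgroup.mem_closure_singleton]
    rcases Int.natAbs_eq_iff.mp hd1 with h | h
    · exact ⟨1, by simp [h]⟩
    · exact ⟨-1, by simp [h]⟩
  obtain ⟨uu, huu, vv, hvv, huv⟩ := h1D
  have huv' : uu = vv + 1 := by omega
  obtain ⟨c, hc⟩ := lemB S vv hvv (huv' ▸ huu)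
  -- Frobenius number facts
  have hbdd : BddAbove {x : ℤ | ¬ S.zmem x} := by
    refine ⟨(c : ℤ), fun x hx => ?_⟩
    by_contra hlt
    push_neg at hlt
    exact hx ⟨x.toNat, hc _ (by omega), by omega⟩
  have hne : Set.Nonempty {x : ℤ | ¬ S.zmem x} := by
    refine ⟨-1, ?_⟩
    rintro ⟨m, hm, hm2⟩
    omega
  have hF : ¬ S.zmem (frobeniusNumber S) := Int.csSup_mem hne hbdd
  set F := frobeniusNumber S with hFdef
  have hFges : ∀ x : ℤ, F < x → S.zmem x := by
    intro x hx
    by_contra hxm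
    exact absurd (le_csSup hbdd hxm) (not_le.mpr hx)
  have hFneg : (-1 : ℤ) ≤ F := le_csSup hbdd (by rintro ⟨m, hm, hm2⟩; omega)
  have hFpf : F ∈ pseudoFrobeniusSet S := by
    refine ⟨hF, fun s hs hs0 => hFges _ ?_⟩
    have : (1 : ℤ) ≤ (s : ℤ) := by exact_mod_cast Nat.one_le_iff_ne_zero.mpr hs0
    omega
  rw [hg] at hFpf
  obtain ⟨j, hj⟩ := hFpf
  set m := (f - 2 * g j).toNat with hmdef
  have hfF : f - 2 * g j = f - 2 * F := by rw [hj]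
  have hm0 : 0 ≤ f - 2 * g j := by rw [hfF]; omega
  have hmz : (m : ℤ) = f - 2 * F := by rw [hmdef, Int.toNat_of_nonneg hm0, hfF]
  have hmodd : Odd m := by
    rw [← Int.odd_coe_nat, hmz]
    exact hodd.sub_even (even_two_mul F)
  have hm1 : 0 < m := by
    obtain ⟨w, hw⟩ := hmodd
    omega
  have hmT : m ∈ T := by
    rw [hT]
    exact AddSubmonoid.subset_closure (Or.inr ⟨j, rfl⟩)
  -- doubling map
  have hdouble : ∀ s, s ∈ S → 2 * s ∈ T := by
    intro s hs
    rw [hS] at hs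
    rw [hT]
    induction hs using AddSubmonoid.closure_induction with
    | mem x hx =>
        obtain ⟨i, rfl⟩ := hx
        exact AddSubmonoid.subset_closure (Or.inl ⟨i, rfl⟩)
    | zero => simpa using (AddSubmonoid.closure _).zero_mem
    | add x y hx hy ihx ihy =>
        have : 2 * (x + y) = 2 * x + 2 * y := by ring
        rw [this]
        exact AddSubmonoid.add_mem _ ihx ihy
  -- pick a large element of `S` coprime to `m`
  set N := m * c + 1 with hNdef
  have hNS : N ∈ S := hc N (by
    have : c ≤ m * c := Nat.le_mul_of_pos_left c hm1
    omega)
  have h2NT : 2 * N ∈ T := hdouble N hNS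
  have hcopN : Nat.Coprime m N := by
    have : Nat.Coprime m (1 + c * m) :=
      (Nat.coprime_add_mul_right_right m 1 c).mpr (Nat.coprime_one_right m)
    simpa [hNdef, Nat.add_comm, Nat.mul_comm] using this
  have hcop : Nat.Coprime m (2 * N) :=
    Nat.Coprime.mul_right (Nat.coprime_two_right.mpr hmodd) hcopN
  exact lemC T m (2 * N) hmT h2NT hcop (by omega)
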